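/- Conversely, if f : [0,1] → ℝ is continuous, α ≥ 1, and y(x) = c + ∫₀¹ G(x,s) s^{α} f(s) ds with G the Lane-Emden Green's function, then y is twice continuously differentiable on (0,1), satisfies y''(x) + (α/x) y'(x) = f(x) for x ∈ (0,1), lim_{x→0⁺} y'(x) = 0, and y(1) = c. -/

import Mathlib

open Set Real intervalIntegral Filter Topology

/-- The Lane-Emden Green's function for shape factor `α ≥ 1`. -/
noncomputable def laneEmdenGreen (α x s : ℝ) : ℝ :=
  if α = 1 then Real.log (max x s) else ((max x s) ^ (1 - α) - 1) / (1 - α)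

noncomputable def lePhi (α t : ℝ) : ℝ :=
  if α = 1 then Real.log t else (t ^ (1 - α) - 1) / (1 - α)

lemma laneEmdenGreen_eq (α x s : ℝ) : laneEmdenGreen α x s = lePhi α (max x s) := rfl

lemma lePhi_one (α : ℝ) : lePhi α 1 = 0 := by
  unfold lePhi; split <;> simp

lemma hasDerivAt_lePhi (α : ℝ) {x : ℝ} (hx : 0 < x) :
    HasDerivAt (lePhi α) (x ^ (-α)) x := by
  unfold lePhi
  by_cases h : α = 1
  · simp only [h, if_pos rfl]
    have := Real.hasDerivAt_log hx.ne'
    simpa [Real.rpow_neg_one] using this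
  · simp only [if_neg h]
    have h1 : (1 : ℝ) - α ≠ 0 := by
      intro hc; apply h; linarith
    have hd : HasDerivAt (fun t : ℝ => t ^ (1 - α)) ((1 - α) * x ^ (1 - α - 1)) x :=
      Real.hasDerivAt_rpow_const (Or.inl hx.ne')
    have := ((hd.sub_const 1).div_const (1 - α))
    have heq : (1 - α) * x ^ (1 - α - 1) / (1 - α) = x ^ (-α) := by
      have he : 1 - α - 1 = -α := by ring
      rw [he, mul_comm, mul_div_assoc, div_self h1, mul_one]
    rwa [heq] at this

theorem stmt5 (α c : ℝ) (hα : 1 ≤ α) (f : ℝ → ℝ)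
    (hf : ContinuousOn f (Icc 0 1))
    (y : ℝ → ℝ)
    (hy : ∀ x, y x = c + ∫ s in (0:ℝ)..1, laneEmdenGreen α x s * s ^ α * f s) :
    ContDiffOn ℝ 2 y (Ioo 0 1) ∧
    (∀ x ∈ Ioo (0:ℝ) 1,
      deriv (deriv y) x + (α / x) * deriv y x = f x) ∧
    Tendsto (deriv y) (𝓝[>] 0) (𝓝 0) ∧
    y 1 = c := by
  have hαpos : (0:ℝ) < α := by linarith
  -- bound on f
  obtain ⟨M, hM⟩ := (isCompact_Icc (a := (0:ℝ)) (b := 1)).exists_bound_of_continuousOn hf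
  -- the inner function g s = s^α * f s
  set g : ℝ → ℝ := fun s => s ^ α * f s with hg_def
  have hrpow_cont : Continuous (fun s : ℝ => s ^ α) :=
    Real.continuous_rpow_const hαpos.le
  have hg_cont : ContinuousOn g (Icc 0 1) := hrpow_cont.continuousOn.mul hf
  have hg_int : ∀ a b : ℝ, a ∈ Icc (0:ℝ) 1 → b ∈ Icc (0:ℝ) 1 →
      IntervalIntegrable g MeasureTheory.volume a b := by
    intro a b ha hb
    exact (hg_cont.mono (uIcc_subset_Icc ha hb)).intervalIntegrable
  -- phi continuous on positive reals
  have hphi_cont : ∀ t : ℝ, 0 < t → ContinuousAt (lePhi α) t := fun t ht =>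
    (hasDerivAt_lePhi α ht).continuousAt
  -- F and H
  set F : ℝ → ℝ := fun x => ∫ s in (0:ℝ)..x, g s with hF_def
  set H : ℝ → ℝ := fun x => ∫ s in x..(1:ℝ), lePhi α s * g s with hH_def
  have hphig_int : ∀ a b : ℝ, a ∈ Ioc (0:ℝ) 1 → b ∈ Ioc (0:ℝ) 1 →
      IntervalIntegrable (fun s => lePhi α s * g s) MeasureTheory.volume a b := by
    intro a b ha hb
    apply ContinuousOn.intervalIntegrable
    apply ContinuousOn.mul
    · intro t ht
      exact (hphi_cont t (lt_of_lt_of_le (lt_min ha.1 hb.1) (by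
        rcases le_total a b with h | h
        · rw [uIcc_of_le h] at ht; exact le_trans (min_le_left _ _) ht.1
        · rw [uIcc_of_ge h] at ht; exact le_trans (min_le_right _ _) ht.1))).continuousWithinAt
    · exact hg_cont.mono (uIcc_subset_Icc ⟨ha.1.le, ha.2⟩ ⟨hb.1.le, hb.2⟩)
  -- decomposition
  have hsplit : ∀ x ∈ Ioc (0:ℝ) 1, y x = c + (lePhi α x * F x + H x) := by
    intro x hx
    rw [hy x]
    congr 1
    have h1 : ∀ s ∈ uIcc (0:ℝ) x, laneEmdenGreen α x s * s ^ α * f s = lePhi α x * g s := by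
      intro s hs
      rw [uIcc_of_le hx.1.le] at hs
      rw [laneEmdenGreen_eq, max_eq_left hs.2, hg_def]
      ring
    have h2 : ∀ s ∈ uIcc x (1:ℝ), laneEmdenGreen α x s * s ^ α * f s = lePhi α s * g s := by
      intro s hs
      rw [uIcc_of_le hx.2] at hs
      rw [laneEmdenGreen_eq, max_eq_right hs.1, hg_def]
      ring
    have hi1 : IntervalIntegrable (fun s => laneEmdenGreen α x s * s ^ α * f s)
        MeasureTheory.volume 0 x := by
      refine ((hg_int 0 x ⟨le_refl _, zero_le_one⟩ ⟨hx.1.le, hx.2⟩).const_mul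
        (lePhi α x)).congr ?_
      exact
        (fun s hs => (h1 s (uIoc_subset_uIcc hs)).symm)
    have hi2 : IntervalIntegrable (fun s => laneEmdenGreen α x s * s ^ α * f s)
        MeasureTheory.volume x 1 := by
      refine (hphig_int x 1 hx ⟨zero_lt_one, le_refl _⟩).congr ?_
      exact
        (fun s hs => (h2 s (uIoc_subset_uIcc hs)).symm)
    rw [← intervalIntegral.integral_add_adjacent_intervals hi1 hi2,
      intervalIntegral.integral_congr h1, intervalIntegral.integral_congr h2,
      intervalIntegral.integral_const_mul]
  -- derivatives of F and H on Ioo 0 1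
  have hIoo_open : IsOpen (Ioo (0:ℝ) 1) := isOpen_Ioo
  have hg_contOn_Ioo : ContinuousOn g (Ioo 0 1) := hg_cont.mono Ioo_subset_Icc_self
  have hg_contAt : ∀ x ∈ Ioo (0:ℝ) 1, ContinuousAt g x := by
    intro x hx
    exact hg_cont.continuousAt (Icc_mem_nhds hx.1 hx.2)
  have hF' : ∀ x ∈ Ioo (0:ℝ) 1, HasDerivAt F (g x) x := by
    intro x hx
    exact intervalIntegral.integral_hasDerivAt_right
      (hg_int 0 x ⟨le_refl _, zero_le_one⟩ ⟨hx.1.le, hx.2.le⟩)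
      (hg_contOn_Ioo.stronglyMeasurableAtFilter hIoo_open x hx)
      (hg_contAt x hx)
  have hphig_contOn_Ioo : ContinuousOn (fun s => lePhi α s * g s) (Ioo 0 1) := by
    apply ContinuousOn.mul _ hg_contOn_Ioo
    intro t ht
    exact (hphi_cont t ht.1).continuousWithinAt
  have hH' : ∀ x ∈ Ioo (0:ℝ) 1, HasDerivAt H (-(lePhi α x * g x)) x := by
    intro x hx
    exact intervalIntegral.integral_hasDerivAt_left
      (hphig_int x 1 ⟨hx.1, hx.2.le⟩ ⟨zero_lt_one, le_refl _⟩)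
      (hphig_contOn_Ioo.stronglyMeasurableAtFilter hIoo_open x hx)
      ((hphi_cont x hx.1).mul (hg_contAt x hx))
  -- derivative of y
  have hy' : ∀ x ∈ Ioo (0:ℝ) 1, HasDerivAt y (x ^ (-α) * F x) x := by
    intro x hx
    have hphi := hasDerivAt_lePhi α hx.1
    have hd : HasDerivAt (fun t => c + (lePhi α t * F t + H t))
        (x ^ (-α) * F x + lePhi α x * g x + -(lePhi α x * g x)) x :=
      ((hphi.mul (hF' x hx)).add (hH' x hx)).const_add c
    have heq : (fun t => c + (lePhi α t * F t + H t)) =ᶠ[𝓝 x] y := by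
      filter_upwards [hIoo_open.mem_nhds hx] with t ht
      exact (hsplit t ⟨ht.1, ht.2.le⟩).symm
    have h2 := hd.congr_of_eventuallyEq heq.symm
    rwa [add_neg_cancel_right] at h2
  have hderiv_eq : ∀ x ∈ Ioo (0:ℝ) 1, deriv y x = x ^ (-α) * F x := fun x hx =>
    (hy' x hx).deriv
  -- second derivative
  have hy'' : ∀ x ∈ Ioo (0:ℝ) 1,
      HasDerivAt (deriv y) (-α * x ^ (-α - 1) * F x + f x) x := by
    intro x hx
    have hxne : x ≠ 0 := hx.1.ne'
    have hr : HasDerivAt (fun t : ℝ => t ^ (-α)) (-α * x ^ (-α - 1)) x :=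
      Real.hasDerivAt_rpow_const (Or.inl hxne)
    have hd := hr.mul (hF' x hx)
    have hkey : x ^ (-α) * g x = f x := by
      rw [hg_def]
      have : x ^ (-α) * x ^ α = 1 := by
        rw [← Real.rpow_add hx.1]; simp
      calc x ^ (-α) * (x ^ α * f x) = (x ^ (-α) * x ^ α) * f x := by ring
        _ = f x := by rw [this, one_mul]
    have hd2 : HasDerivAt (fun t => t ^ (-α) * F t) (-α * x ^ (-α - 1) * F x + f x) x := by
      rw [← hkey]; exact hd
    have heq : (fun t : ℝ => t ^ (-α) * F t) =ᶠ[𝓝 x] deriv y := by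
      filter_upwards [hIoo_open.mem_nhds hx] with t ht
      exact (hderiv_eq t ht).symm
    exact hd2.congr_of_eventuallyEq heq.symm
  have hderiv2_eq : ∀ x ∈ Ioo (0:ℝ) 1,
      deriv (deriv y) x = -α * x ^ (-α - 1) * F x + f x := fun x hx => (hy'' x hx).deriv
  have hFcont : ContinuousOn F (Ioo 0 1) := fun x hx =>
    ((hF' x hx).continuousAt).continuousWithinAt
  refine ⟨?_, ?_, ?_, ?_⟩
  · -- ContDiffOn 2
    rw [show (2 : WithTop ℕ∞) = 1 + 1 from rfl,
      contDiffOn_succ_iff_deriv_of_isOpen hIoo_open]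
    refine ⟨fun x hx => ((hy' x hx).differentiableAt).differentiableWithinAt, by simp, ?_⟩
    rw [show (1 : WithTop ℕ∞) = 0 + 1 from rfl,
      contDiffOn_succ_iff_deriv_of_isOpen hIoo_open]
    refine ⟨fun x hx => ((hy'' x hx).differentiableAt).differentiableWithinAt, by simp, ?_⟩
    rw [contDiffOn_zero]
    apply ContinuousOn.congr _ hderiv2_eq
    apply ContinuousOn.add _ (hf.mono Ioo_subset_Icc_self)
    apply ContinuousOn.mul _ hFcont
    apply ContinuousOn.mul continuousOn_const
    intro x hx
    exact (Real.continuousAt_rpow_const x _ (Or.inl hx.1.ne')).continuousWithinAt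
  · -- the ODE
    intro x hx
    rw [hderiv2_eq x hx, hderiv_eq x hx]
    have hxne : x ≠ 0 := hx.1.ne'
    have h1 : x ^ (-α - 1) = x ^ (-α) * x⁻¹ := by
      rw [show -α - 1 = -α + (-1) by ring, Real.rpow_add hx.1, Real.rpow_neg_one]
    rw [h1]
    field_simp
    ring
  · -- limit of deriv y at 0+
    have hM0 : 0 ≤ M := le_trans (abs_nonneg _) (by simpa using hM 0 ⟨le_refl _, zero_le_one⟩)
    apply squeeze_zero_norm' (a := fun x => M * x)
    · filter_upwards [Ioo_mem_nhdsGT (zero_lt_one : (0:ℝ) < 1)] with x hx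
      rw [hderiv_eq x hx]
      have hFbound : ‖F x‖ ≤ x ^ α * M * |x - 0| := by
        show ‖∫ s in (0:ℝ)..x, g s‖ ≤ x ^ α * M * |x - 0|
        apply intervalIntegral.norm_integral_le_of_norm_le_const
        intro s hs
        rw [uIoc_of_le hx.1.le] at hs
        have hs1 : s ∈ Icc (0:ℝ) 1 := ⟨hs.1.le, le_trans hs.2 hx.2.le⟩
        rw [hg_def]
        calc ‖s ^ α * f s‖ = s ^ α * |f s| := by
              rw [norm_mul, Real.norm_eq_abs, Real.norm_eq_abs,
                abs_of_nonneg (Real.rpow_nonneg hs.1.le α)]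
          _ ≤ x ^ α * M := by
              apply mul_le_mul (Real.rpow_le_rpow hs.1.le hs.2 hαpos.le)
                (hM s hs1) (abs_nonneg _) (Real.rpow_nonneg hx.1.le α)
      have hxa : (0:ℝ) < x ^ (-α) := Real.rpow_pos_of_pos hx.1 _
      calc ‖x ^ (-α) * F x‖ = x ^ (-α) * ‖F x‖ := by
            rw [norm_mul, Real.norm_eq_abs, abs_of_pos hxa]
        _ ≤ x ^ (-α) * (x ^ α * M * |x - 0|) := by
            exact mul_le_mul_of_nonneg_left hFbound hxa.le
        _ = (x ^ (-α) * x ^ α) * (M * x) := by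
            rw [abs_of_pos (by simpa using hx.1)]; ring
        _ = M * x := by
            rw [← Real.rpow_add hx.1]; simp
    · have : Tendsto (fun x : ℝ => M * x) (𝓝[>] 0) (𝓝 (M * 0)) :=
        ((continuous_const.mul continuous_id).tendsto 0).mono_left nhdsWithin_le_nhds
      simpa using this
  · -- boundary value
    rw [hy 1]
    have : ∀ s ∈ uIcc (0:ℝ) 1, laneEmdenGreen α 1 s * s ^ α * f s = 0 := by
      intro s hs
      rw [uIcc_of_le zero_le_one] at hs
      rw [laneEmdenGreen_eq, max_eq_left hs.2, lePhi_one]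
      ring
    rw [intervalIntegral.integral_congr this]
    simp
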